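/- Let U ⊆ ℂ be open and let g : U → ℂ be holomorphic and nowhere zero. Define W := (3/2)·(g'/g)² − g''/g − (1/(1 + |g|²))·(g'/g)² on U. Then both the real part and the imaginary part of W satisfy the Jacobi equation associated to g on U: Δ(Re W) + (8|g'|²/(1 + |g|²)²)·(Re W) = 0 and Δ(Im W) + (8|g'|²/(1 + |g|²)²)·(Im W) = 0. In particular the Shiffman function S := Im W is a Jacobi function. -/

import Mathlib

open Complex

/-- Flat Laplacian `∂²/∂x² + ∂²/∂y²` on `ℂ ≅ ℝ²` for real-valued functions. -/
noncomputable def lap (f : ℂ → ℝ) (z : ℂ) : ℝ :=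
  fderiv ℝ (fun w => fderiv ℝ f w 1) z 1
    + fderiv ℝ (fun w => fderiv ℝ f w Complex.I) z Complex.I

/-- The complex Shiffman expression of a nowhere-zero holomorphic `g`:
`W = (3/2)(g'/g)² − g''/g − (1/(1+|g|²))(g'/g)²`. -/
noncomputable def shiffmanW (g : ℂ → ℂ) (z : ℂ) : ℂ :=
  (3 / 2) * (deriv g z / g z) ^ 2 - deriv (deriv g) z / g z
    - (1 / ((1 + ‖g z‖ ^ 2 : ℝ) : ℂ)) * (deriv g z / g z) ^ 2

/-! ### A tiny Wirtinger calculus over `ℝ` for maps `ℂ → ℂ` -/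

/-- The `ℝ`-linear map `v ↦ a v + b conj v`. -/
noncomputable def LW (a b : ℂ) : ℂ →L[ℝ] ℂ :=
  a • (ContinuousLinearMap.id ℝ ℂ) + b • (Complex.conjCLE.toContinuousLinearMap)

@[simp] lemma LW_apply (a b v : ℂ) : LW a b v = a * v + b * (starRingEnd ℂ) v := by
  simp [LW, smul_eq_mul]

/-- `f` has Wirtinger derivatives `p = ∂f`, `q = ∂̄f` at `z`. -/
def HasWD (f : ℂ → ℂ) (p q z : ℂ) : Prop := HasFDerivAt f (LW p q) z

lemma HasWD.congr_pq {f p q z} (h : HasWD f p q z) (p' q' : ℂ)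
    (hp : p = p') (hq : q = q') : HasWD f p' q' z := by
  subst hp; subst hq; exact h

lemma hasWD_const (c z : ℂ) : HasWD (fun _ => c) 0 0 z := by
  have hL : LW 0 0 = 0 := by ext v; simp
  unfold HasWD; rw [hL]; exact hasFDerivAt_const c z

lemma HasDerivAt.hasWD {f : ℂ → ℂ} {f' z : ℂ} (h : HasDerivAt f f' z) :
    HasWD f f' 0 z := by
  have h2 := h.hasFDerivAt.restrictScalars ℝ
  have hL : LW f' 0 = (ContinuousLinearMap.smulRight (1 : ℂ →L[ℂ] ℂ) f').restrictScalars ℝ := by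
    ext v; simp [smul_eq_mul, mul_comm]
  unfold HasWD; rw [hL]; exact h2

lemma HasDerivAt.hasWD_conj {f : ℂ → ℂ} {f' z : ℂ} (h : HasDerivAt f f' z) :
    HasWD (fun w => (starRingEnd ℂ) (f w)) 0 ((starRingEnd ℂ) f') z := by
  have h2 := h.hasFDerivAt.restrictScalars ℝ
  have h3 := (Complex.conjCLE.toContinuousLinearMap.hasFDerivAt (x := f z)).comp z h2
  have hL : LW 0 ((starRingEnd ℂ) f')
      = Complex.conjCLE.toContinuousLinearMap.comp
          ((ContinuousLinearMap.smulRight (1 : ℂ →L[ℂ] ℂ) f').restrictScalars ℝ) := by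
    ext v; simp [smul_eq_mul, mul_comm]
  unfold HasWD; rw [hL]; exact h3

lemma HasWD.add {f d : ℂ → ℂ} {p q pd qd z} (h1 : HasWD f p q z) (h2 : HasWD d pd qd z) :
    HasWD (fun w => f w + d w) (p + pd) (q + qd) z := by
  have hL : LW (p + pd) (q + qd) = LW p q + LW pd qd := by ext v; simp; ring
  unfold HasWD; rw [hL]; exact HasFDerivAt.add h1 h2

lemma HasWD.sub {f d : ℂ → ℂ} {p q pd qd z} (h1 : HasWD f p q z) (h2 : HasWD d pd qd z) :
    HasWD (fun w => f w - d w) (p - pd) (q - qd) z := by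
  have hL : LW (p - pd) (q - qd) = LW p q - LW pd qd := by ext v; simp; ring
  unfold HasWD; rw [hL]; exact HasFDerivAt.sub h1 h2

lemma HasWD.mul {f d : ℂ → ℂ} {p q pd qd z} (h1 : HasWD f p q z) (h2 : HasWD d pd qd z) :
    HasWD (fun w => f w * d w) (p * d z + f z * pd) (q * d z + f z * qd) z := by
  have h3 := HasFDerivAt.mul' h1 h2
  have hL : LW (p * d z + f z * pd) (q * d z + f z * qd)
      = f z • LW pd qd + (LW p q).smulRight (d z) := by
    ext v; simp [smul_eq_mul]; ring
  unfold HasWD; rw [hL]; exact h3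

lemma HasWD.inv {f : ℂ → ℂ} {p q z} (h : HasWD f p q z) (h0 : f z ≠ 0) :
    HasWD (fun w => (f w)⁻¹) (-(p / f z ^ 2)) (-(q / f z ^ 2)) z := by
  have h3 := (hasFDerivAt_inv' (𝕜 := ℝ) h0).comp z h
  have hL : LW (-(p / f z ^ 2)) (-(q / f z ^ 2))
      = (-ContinuousLinearMap.mulLeftRight ℝ ℂ (f z)⁻¹ (f z)⁻¹).comp (LW p q) := by
    ext v
    simp [ContinuousLinearMap.mulLeftRight_apply]
    field_simp
    ring
  unfold HasWD; rw [hL]; exact h3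

lemma HasWD.div {f d : ℂ → ℂ} {p q pd qd z} (h1 : HasWD f p q z) (h2 : HasWD d pd qd z)
    (h0 : d z ≠ 0) :
    HasWD (fun w => f w / d w) ((p * d z - f z * pd) / d z ^ 2)
      ((q * d z - f z * qd) / d z ^ 2) z := by
  simp only [div_eq_mul_inv]
  exact (h1.mul (h2.inv h0)).congr_pq _ _ (by field_simp; ring) (by field_simp; ring)

lemma HasWD.pow2 {f : ℂ → ℂ} {p q z} (h : HasWD f p q z) :
    HasWD (fun w => f w ^ 2) (2 * f z * p) (2 * f z * q) z := by
  simp only [pow_two]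
  exact (h.mul h).congr_pq _ _ (by ring) (by ring)

lemma HasWD.mul_const {f : ℂ → ℂ} {p q z} (h : HasWD f p q z) (c : ℂ) :
    HasWD (fun w => f w * c) (p * c) (q * c) z :=
  (h.mul (hasWD_const c z)).congr_pq _ _ (by ring) (by ring)

/-- The Laplacian of `T ∘ f` in terms of second Wirtinger derivatives:
`Δ(T∘f) = T(2 ∂̄∂f + 2 ∂∂̄f)`. -/
lemma lap_eq (T : ℂ →L[ℝ] ℝ) {U : Set ℂ} (hU : IsOpen U) {z : ℂ} (hz : z ∈ U)
    {f p q : ℂ → ℂ} {pp pq qp qq : ℂ}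
    (hf : ∀ w ∈ U, HasWD f (p w) (q w) w)
    (hp : HasWD p pp pq z) (hq : HasWD q qp qq z) :
    lap (fun w => T (f w)) z = T (2 * pq + 2 * qp) := by
  have hTf : ∀ w ∈ U, HasFDerivAt (fun w => T (f w)) (T.comp (LW (p w) (q w))) w :=
    fun w hw => T.hasFDerivAt.comp w (hf w hw)
  have e1 : (fun w => fderiv ℝ (fun w => T (f w)) w 1) =ᶠ[nhds z]
      (fun w => T (p w + q w)) := by
    filter_upwards [hU.mem_nhds hz] with w hw
    rw [(hTf w hw).fderiv]
    simp only [ContinuousLinearMap.comp_apply, LW_apply, map_one, mul_one]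
  have e2 : (fun w => fderiv ℝ (fun w => T (f w)) w Complex.I) =ᶠ[nhds z]
      (fun w => T ((p w - q w) * Complex.I)) := by
    filter_upwards [hU.mem_nhds hz] with w hw
    rw [(hTf w hw).fderiv]
    simp only [ContinuousLinearMap.comp_apply, LW_apply, Complex.conj_I]
    congr 1
    ring
  have d1 : HasFDerivAt (fun w => T (p w + q w)) (T.comp (LW (pp + qp) (pq + qq))) z :=
    T.hasFDerivAt.comp z (hp.add hq)
  have d2 : HasFDerivAt (fun w => T ((p w - q w) * Complex.I))
      (T.comp (LW ((pp - qp) * Complex.I) ((pq - qq) * Complex.I))) z :=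
    T.hasFDerivAt.comp z ((hp.sub hq).mul_const Complex.I)
  have r1 : fderiv ℝ (fun w => fderiv ℝ (fun w => T (f w)) w 1) z
      = T.comp (LW (pp + qp) (pq + qq)) := by rw [e1.fderiv_eq, d1.fderiv]
  have r2 : fderiv ℝ (fun w => fderiv ℝ (fun w => T (f w)) w Complex.I) z
      = T.comp (LW ((pp - qp) * Complex.I) ((pq - qq) * Complex.I)) := by
    rw [e2.fderiv_eq, d2.fderiv]
  unfold lap
  rw [r1, r2]
  simp only [ContinuousLinearMap.comp_apply, LW_apply, Complex.conj_I, map_one, mul_one]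
  rw [← map_add]
  congr 1
  linear_combination (pp - qp - pq + qq) * Complex.I_mul_I

lemma jacobi_of (T : ℂ →L[ℝ] ℝ) (hT : ∀ (r : ℝ) (w : ℂ), T ((r : ℂ) * w) = r * T w)
    {U : Set ℂ} (hU : IsOpen U) {z : ℂ} (hz : z ∈ U)
    {f p q : ℂ → ℂ} {pp pq qp qq : ℂ}
    (hf : ∀ w ∈ U, HasWD f (p w) (q w) w)
    (hp : HasWD p pp pq z) (hq : HasWD q qp qq z) (c : ℝ)
    (hmain : 2 * pq + 2 * qp + (c : ℂ) * f z = 0) :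
    lap (fun w => T (f w)) z + c * T (f z) = 0 := by
  rw [lap_eq T hU hz hf hp hq, ← hT c (f z), ← map_add, hmain, map_zero]

/-- The Shiffman expression written with `conj` instead of `abs`. -/
noncomputable def Wfun (g : ℂ → ℂ) (w : ℂ) : ℂ :=
  (3 / 2 : ℂ) * (deriv g w / g w) ^ 2 - deriv (deriv g) w / g w
    - (1 + g w * (starRingEnd ℂ) (g w))⁻¹ * (deriv g w / g w) ^ 2

/-- `∂` of the Shiffman expression. -/
noncomputable def pW (g : ℂ → ℂ) (w : ℂ) : ℂ :=
  (3 / 2 : ℂ) * (2 * (deriv g w / g w) *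
      ((deriv (deriv g) w * g w - deriv g w ^ 2) / g w ^ 2))
    - (deriv (deriv (deriv g)) w * g w - deriv (deriv g) w * deriv g w) / g w ^ 2
    + deriv g w * (starRingEnd ℂ) (g w) * (deriv g w / g w) ^ 2
        / (1 + g w * (starRingEnd ℂ) (g w)) ^ 2
    - 2 * (deriv g w / g w) *
        ((deriv (deriv g) w * g w - deriv g w ^ 2) / g w ^ 2)
        / (1 + g w * (starRingEnd ℂ) (g w))

/-- `∂̄` of the Shiffman expression. -/
noncomputable def qW (g : ℂ → ℂ) (w : ℂ) : ℂ :=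
  g w * (starRingEnd ℂ) (deriv g w) * (deriv g w / g w) ^ 2
    / (1 + g w * (starRingEnd ℂ) (g w)) ^ 2

lemma one_add_mul_conj_ne_zero (u : ℂ) : (1 : ℂ) + u * (starRingEnd ℂ) u ≠ 0 := by
  rw [Complex.mul_conj, ← Complex.ofReal_one, ← Complex.ofReal_add, Ne,
    Complex.ofReal_eq_zero]
  have := Complex.normSq_nonneg u
  intro h
  linarith


lemma three_frac (a b c d e f : ℂ) (hb : b ≠ 0) (hd : d ≠ 0) (hf : f ≠ 0)
    (h : a * (d * f) + c * (b * f) + e * (b * d) = 0) :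
    a / b + c / d + e / f = 0 := by
  rw [div_add_div _ _ hb hd, div_add_div _ _ (mul_ne_zero hb hd) hf, div_eq_zero_iff]
  left
  linear_combination h

/-- The key algebraic identity behind the Jacobi equation for the Shiffman function. -/
lemma shiffman_key (x x1 x2 y y1 D : ℂ) (hx : x ≠ 0) (hD : D ≠ 0) (hDef : D = 1 + x * y) :
    2 * ((x1 * y1 * (x1 / x) ^ 2 * D ^ 2
          - 2 * (x1 * y) * (x1 / x) ^ 2 * D * (x * y1)) / (D ^ 2) ^ 2
        + 2 * (x1 / x) * ((x2 * x - x1 ^ 2) / x ^ 2) * (x * y1) / D ^ 2)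
      + 2 * (((x1 * y1 * (x1 / x) ^ 2 + x * y1 * (2 * (x1 / x) * ((x2 * x - x1 ^ 2) / x ^ 2)))
            * D ^ 2
          - x * y1 * (x1 / x) ^ 2 * (2 * D * (x1 * y))) / (D ^ 2) ^ 2)
      + 8 * (x1 * y1) / D ^ 2
          * (3 / 2 * (x1 / x) ^ 2 - x2 / x - D⁻¹ * (x1 / x) ^ 2) = 0 := by
  field_simp
  subst hDef; ring

set_option maxHeartbeats 1600000 in
/-- Both the real and the imaginary part of the Shiffman expression `W` of a
nowhere-zero holomorphic function `g` satisfy the Jacobi equation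
`Δv + (8|g'|²/(1+|g|²)²) v = 0`; in particular the Shiffman function `S = Im W`
is a Jacobi function. -/
theorem shiffman_function_is_jacobi_function
    (U : Set ℂ) (hU : IsOpen U) (g : ℂ → ℂ)
    (hg : DifferentiableOn ℂ g U) (hg0 : ∀ z ∈ U, g z ≠ 0) :
    ∀ z ∈ U,
      (lap (fun w => (shiffmanW g w).re) z
          + (8 * ‖deriv g z‖ ^ 2 / (1 + ‖g z‖ ^ 2) ^ 2)
            * (shiffmanW g z).re = 0) ∧
      (lap (fun w => (shiffmanW g w).im) z
          + (8 * ‖deriv g z‖ ^ 2 / (1 + ‖g z‖ ^ 2) ^ 2)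
            * (shiffmanW g z).im = 0) := by
  intro z hz
  -- analyticity and derivatives
  have han : AnalyticOnNhd ℂ g U := hg.analyticOnNhd hU
  have han1 : AnalyticOnNhd ℂ (deriv g) U := han.deriv
  have han2 : AnalyticOnNhd ℂ (deriv (deriv g)) U := han1.deriv
  have han3 : AnalyticOnNhd ℂ (deriv (deriv (deriv g))) U := han2.deriv
  have Hd : ∀ w ∈ U, HasDerivAt g (deriv g w) w :=
    fun w hw => ((han w hw).differentiableAt).hasDerivAt
  have Hd1 : ∀ w ∈ U, HasDerivAt (deriv g) (deriv (deriv g) w) w :=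
    fun w hw => ((han1 w hw).differentiableAt).hasDerivAt
  have Hd2 : ∀ w ∈ U, HasDerivAt (deriv (deriv g)) (deriv (deriv (deriv g)) w) w :=
    fun w hw => ((han2 w hw).differentiableAt).hasDerivAt
  have Hd3 : ∀ w ∈ U, HasDerivAt (deriv (deriv (deriv g)))
      (deriv (deriv (deriv (deriv g))) w) w :=
    fun w hw => ((han3 w hw).differentiableAt).hasDerivAt
  -- first level: Wirtinger derivatives of W on U
  have hf : ∀ w ∈ U, HasWD (fun w => Wfun g w) (pW g w) (qW g w) w := by
    intro w hw
    have h0 := hg0 w hw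
    have hD := one_add_mul_conj_ne_zero (g w)
    have hx := (Hd w hw).hasWD
    have hx1 := (Hd1 w hw).hasWD
    have hx2 := (Hd2 w hw).hasWD
    have hy := (Hd w hw).hasWD_conj
    have B1 := hx1.div hx h0
    have B2 := B1.pow2
    have DD := (hasWD_const 1 w).add (hx.mul hy)
    have hiD := DD.inv hD
    have hW := (((hasWD_const (3/2) w).mul B2).sub (hx2.div hx h0)).sub (hiD.mul B2)
    refine hW.congr_pq _ _ ?_ ?_
    · simp only [pW]; ring
    · simp only [qW]; ring
  -- second level at z
  have h0 := hg0 z hz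
  have hD := one_add_mul_conj_ne_zero (g z)
  have hD2 : (1 + g z * (starRingEnd ℂ) (g z)) ^ 2 ≠ 0 := pow_ne_zero _ hD
  have hx := (Hd z hz).hasWD
  have hx1 := (Hd1 z hz).hasWD
  have hx2 := (Hd2 z hz).hasWD
  have hx3 := (Hd3 z hz).hasWD
  have hy := (Hd z hz).hasWD_conj
  have hy1 := (Hd1 z hz).hasWD_conj
  have B1 := hx1.div hx h0
  have B2 := B1.pow2
  have Bnum := (hx2.mul hx).sub hx1.pow2
  have Bden := hx.pow2
  have hgz2 : g z ^ 2 ≠ 0 := pow_ne_zero _ h0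
  have B3 := Bnum.div Bden hgz2
  have B4 := ((hasWD_const 2 z).mul B1).mul B3
  have DD := (hasWD_const 1 z).add (hx.mul hy)
  have T1 := (hasWD_const (3/2) z).mul B4
  have T2 := ((hx3.mul hx).sub (hx2.mul hx1)).div Bden hgz2
  have T3 := ((hx1.mul hy).mul B2).div DD.pow2 hD2
  have T4 := B4.div DD hD
  have hp : HasWD (pW g) _ _ z := ((T1.sub T2).add T3).sub T4
  have hq : HasWD (qW g) _ _ z := ((hx.mul hy1).mul B2).div DD.pow2 hD2
  -- rewrite shiffmanW as Wfun
  have hsh : shiffmanW g = Wfun g := by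
    funext w
    have hcast : ((1 + ‖g w‖ ^ 2 : ℝ) : ℂ)
        = 1 + g w * (starRingEnd ℂ) (g w) := by
      push_cast
      rw [← Complex.ofReal_pow, Complex.sq_norm, Complex.mul_conj]
    simp only [shiffmanW, Wfun, hcast, one_div]
  -- the real coefficient as a complex expression
  set c : ℝ := 8 * ‖deriv g z‖ ^ 2 / (1 + ‖g z‖ ^ 2) ^ 2 with hcdef
  have hc : (c : ℂ) = 8 * (deriv g z * (starRingEnd ℂ) (deriv g z))
      / (1 + g z * (starRingEnd ℂ) (g z)) ^ 2 := by
    rw [hcdef]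
    push_cast
    rw [← Complex.ofReal_pow, ← Complex.ofReal_pow, Complex.sq_norm, Complex.sq_norm,
      Complex.mul_conj, Complex.mul_conj]
  rw [hsh]
  constructor
  · have h := jacobi_of Complex.reCLM (fun r w => by simp [Complex.mul_re]) hU hz hf hp hq c
      (by rw [hc]; simp only [Wfun]
          linear_combination shiffman_key (g z) (deriv g z) (deriv (deriv g) z)
            ((starRingEnd ℂ) (g z)) ((starRingEnd ℂ) (deriv g z))
            (1 + g z * (starRingEnd ℂ) (g z)) h0 hD rfl)
    simpa using h
  · have h := jacobi_of Complex.imCLM (fun r w => by simp [Complex.mul_im]) hU hz hf hp hq c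
      (by rw [hc]; simp only [Wfun]
          linear_combination shiffman_key (g z) (deriv g z) (deriv (deriv g) z)
            ((starRingEnd ℂ) (g z)) ((starRingEnd ℂ) (deriv g z))
            (1 + g z * (starRingEnd ℂ) (g z)) h0 hD rfl)
    simpa using h
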